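/- Let A and K₁, …, Kₙ be self-adjoint linear operators on Sym₃, let β₁, …, βₙ ≥ 0 with Σᵢβᵢ = 1, set B = Σᵢ βᵢKᵢ, let e₀ ∈ Sym₃, and let γ* ∈ ℝ. Suppose m₀ ∈ (0,1) is such that A + (1−m)B is invertible for all m in a neighborhood of m₀, and define M(m) = (A + (1−m)B)⁻¹, q(m) = M(m):e₀, and E(m) = m·(γ* + (1/2)·e₀:q(m)). Then E is differentiable at m₀ and E′(m₀) = γ* + (1/2)·q(m₀):((A + B):q(m₀)). In particular, if additionally q(m₀):(Kᵢ:q(m₀)) takes the same value 𝒦 for every i, then E′(m₀) = γ* + (1/2)·(q(m₀):(A:q(m₀)) + 𝒦). -/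

import Mathlib

open Matrix

noncomputable section

/-- 3×3 real matrices; symmetric ones model Sym₃. -/
abbrev Mat := Matrix (Fin 3) (Fin 3) ℝ

/-- Inner product on matrices: a:b = tr(ab). -/
def inn (a b : Mat) : ℝ := (a * b).trace

/-- Isotropic elasticity tensor with Lamé parameters l, m: ε ↦ l(tr ε)E + 2mε. -/
def isoC (l m : ℝ) (e : Mat) : Mat := (l * e.trace) • (1 : Mat) + (2*m) • e

/-- The interface operator K(n) for material parameters (μ, ν):
K(n):q = (1/(2μ))(qₙ⊗n + n⊗qₙ − (qₙₙ/(1−ν)) n⊗n). -/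
def Kop (μ ν : ℝ) (n : Fin 3 → ℝ) (q : Mat) : Mat :=
  (1/(2*μ)) • (vecMulVec (q.mulVec n) n + vecMulVec n (q.mulVec n)
    - ((n ⬝ᵥ q.mulVec n)/(1-ν)) • vecMulVec n n)


lemma inn_comm (a b : Mat) : inn a b = inn b a := Matrix.trace_mul_comm a b
lemma inn_add_right (a b c : Mat) : inn a (b + c) = inn a b + inn a c := by
  simp [inn, mul_add]
lemma inn_smul_right (r : ℝ) (a b : Mat) : inn a (r • b) = r * inn a b := by
  simp [inn, Matrix.mul_smul]
lemma inn_sum_right {ι : Type*} (s : Finset ι) (a : Mat) (f : ι → Mat) :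
    inn a (∑ i ∈ s, f i) = ∑ i ∈ s, inn a (f i) := by
  simp [inn, Finset.mul_sum]

attribute [local instance] Matrix.normedAddCommGroup Matrix.normedSpace
instance instNACGMat : NormedAddCommGroup Mat :=
  { (Matrix.normedAddCommGroup : NormedAddCommGroup Mat) with
    toMetricSpace :=
      (Matrix.normedAddCommGroup : NormedAddCommGroup Mat).toMetricSpace.replaceTopology
        (by ext; rfl) }
instance instNSMat : NormedSpace ℝ Mat :=
  NormedSpace.mk (Matrix.normedSpace (R := ℝ) (m := Fin 3) (n := Fin 3) (α := ℝ)).norm_smul_le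

/-- derivative of the interaction energy E(m) = m(γ* + (1/2)e₀:q(m)) with
q(m) = (A + (1−m)B)⁻¹:e₀, B = Σᵢ βᵢKᵢ: E′(m₀) = γ* + (1/2)q:( (A + B):q ); if moreover
q:(Kᵢ:q) = 𝒦 for all i, then E′(m₀) = γ* + (1/2)(q:(A:q) + 𝒦). -/
theorem maxwell_relation_derivative
    (nK : ℕ)
    (A : Mat →ₗ[ℝ] Mat) (hAsa : ∀ a b : Mat, inn (A a) b = inn a (A b))
    (K : Fin nK → (Mat →ₗ[ℝ] Mat))
    (hKsa : ∀ i, ∀ a b : Mat, inn ((K i) a) b = inn a ((K i) b))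
    (β : Fin nK → ℝ) (hβ : ∀ i, 0 ≤ β i) (hβsum : ∑ i, β i = 1)
    (B : Mat →ₗ[ℝ] Mat) (hB : ∀ a : Mat, B a = ∑ i, β i • (K i) a)
    (e₀ : Mat) (he₀ : e₀.IsSymm) (γs : ℝ)
    (m₀ : ℝ) (hm₀ : m₀ ∈ Set.Ioo (0:ℝ) 1)
    (U : Set ℝ) (hU : U ∈ nhds m₀)
    (M : ℝ → (Mat →ₗ[ℝ] Mat))
    (hM : ∀ m ∈ U, (∀ a : Mat, M m (A a + (1-m) • B a) = a)
                 ∧ (∀ a : Mat, A (M m a) + (1-m) • B (M m a) = a))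
    (Efun : ℝ → ℝ)
    (hEfun : ∀ m : ℝ, Efun m = m * (γs + (1/2) * inn e₀ (M m e₀))) :
    HasDerivAt Efun
      (γs + (1/2) * inn (M m₀ e₀) (A (M m₀ e₀) + B (M m₀ e₀))) m₀
    ∧ ∀ 𝒦 : ℝ, (∀ i, inn (M m₀ e₀) ((K i) (M m₀ e₀)) = 𝒦) →
        HasDerivAt Efun
          (γs + (1/2) * (inn (M m₀ e₀) (A (M m₀ e₀)) + 𝒦)) m₀ := by
  classical
  have hm₀U : m₀ ∈ U := mem_of_mem_nhds hU
  set q : Mat := M m₀ e₀ with hqdef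
  -- self-adjointness of B
  have hBsa : ∀ a b : Mat, inn (B a) b = inn a (B b) := by
    intro a b
    rw [hB a, hB b, inn_sum_right, inn_comm, inn_sum_right]
    refine Finset.sum_congr rfl fun i _ => ?_
    rw [inn_smul_right, inn_smul_right, inn_comm, hKsa i]
  -- self-adjointness of L = A + (1-m₀)B
  have hLsa : ∀ x y : Mat,
      inn (A x + (1-m₀) • B x) y = inn x (A y + (1-m₀) • B y) := by
    intro x y
    rw [inn_comm, inn_add_right, inn_add_right, inn_smul_right, inn_smul_right,
      inn_comm y (A x), hAsa, inn_comm y (B x), hBsa, inn_comm x (A y), inn_comm x (B y),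
      inn_comm (A y) x, inn_comm (B y) x]
  -- self-adjointness of M m₀
  have hMsa : ∀ a b : Mat, inn (M m₀ a) b = inn a (M m₀ b) := by
    intro a b
    calc inn (M m₀ a) b = inn (M m₀ a) (A (M m₀ b) + (1-m₀) • B (M m₀ b)) := by
          rw [(hM m₀ hm₀U).2 b]
      _ = inn (A (M m₀ a) + (1-m₀) • B (M m₀ a)) (M m₀ b) := (hLsa _ _).symm
      _ = inn a (M m₀ b) := by rw [(hM m₀ hm₀U).2 a]
  -- move to continuous linear maps
  set toC : (Mat →ₗ[ℝ] Mat) → (Mat →L[ℝ] Mat) :=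
    fun f => LinearMap.toContinuousLinearMap f with htoC
  have htoC_apply : ∀ (f : Mat →ₗ[ℝ] Mat) (x : Mat), toC f x = f x := fun f x => rfl
  set Lc : ℝ → (Mat →L[ℝ] Mat) := fun m => toC A + (1-m) • toC B with hLc
  have hLc_apply : ∀ (m : ℝ) (x : Mat), Lc m x = A x + (1-m) • B x := fun m x => rfl
  have hunit : ∀ m ∈ U, (toC (M m)) * (Lc m) = 1 ∧ (Lc m) * (toC (M m)) = 1 := by
    intro m hm
    constructor
    · refine ContinuousLinearMap.ext fun a => ?_
      simp only [ContinuousLinearMap.mul_apply, ContinuousLinearMap.one_apply,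
        hLc_apply, htoC_apply]
      exact (hM m hm).1 a
    · refine ContinuousLinearMap.ext fun a => ?_
      simp only [ContinuousLinearMap.mul_apply, ContinuousLinearMap.one_apply,
        hLc_apply, htoC_apply]
      exact (hM m hm).2 a
  have hinv : ∀ m ∈ U, Ring.inverse (Lc m) = toC (M m) := fun m hm =>
    Ring.inverse_unit ⟨Lc m, toC (M m), (hunit m hm).2, (hunit m hm).1⟩
  set u : (Mat →L[ℝ] Mat)ˣ :=
    ⟨Lc m₀, toC (M m₀), (hunit m₀ hm₀U).2, (hunit m₀ hm₀U).1⟩ with hu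
  -- derivative of Lc
  have hL : HasDerivAt Lc (-(toC B)) m₀ := by
    have h1 : HasDerivAt (fun m : ℝ => (1 - m)) (-1) m₀ := by
      simpa using (hasDerivAt_id m₀).const_sub 1
    have h2 := (hasDerivAt_const m₀ (toC A)).add (h1.smul_const (toC B))
    exact h2.congr_deriv (by simp [neg_one_smul])
  -- derivative of the inverse
  have hinvD : HasDerivAt (fun m => Ring.inverse (Lc m))
      (toC (M m₀) * toC B * toC (M m₀)) m₀ := by
    have h := (hasFDerivAt_ringInverse (𝕜 := ℝ) u).comp_hasDerivAt m₀ hL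
    refine h.congr_deriv ?_
    refine ContinuousLinearMap.ext fun a => ?_
    simp only [hu, Units.inv_mk, ContinuousLinearMap.neg_apply,
      ContinuousLinearMap.mulLeftRight_apply, ContinuousLinearMap.mul_apply,
      htoC_apply, map_neg, neg_neg]
  -- derivative of q(m)
  have hq' : HasDerivAt (fun m => (Ring.inverse (Lc m)) e₀)
      ((toC (M m₀) * toC B * toC (M m₀)) e₀) m₀ := by
    have := hinvD.clm_apply (hasDerivAt_const m₀ e₀)
    simpa using this
  -- the trace functional
  set T : Mat →L[ℝ] ℝ := LinearMap.toContinuousLinearMap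
    ((Matrix.traceLinearMap (Fin 3) ℝ ℝ).comp (LinearMap.mulLeft ℝ e₀)) with hTdef
  have hT : ∀ x : Mat, T x = inn e₀ x := fun x => rfl
  have hf : HasDerivAt (fun m => T ((Ring.inverse (Lc m)) e₀))
      (T ((toC (M m₀) * toC B * toC (M m₀)) e₀)) m₀ :=
    T.hasFDerivAt.comp_hasDerivAt m₀ hq'
  -- derivative of the model energy
  have h1 := (hasDerivAt_const m₀ γs).add (hf.const_mul (1/2))
  have hg := (hasDerivAt_id m₀).mul h1
  have hEq : Efun =ᶠ[nhds m₀]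
      (fun m => m * (γs + (1/2) * T ((Ring.inverse (Lc m)) e₀))) := by
    filter_upwards [hU] with m hm
    rw [hEfun m, hinv m hm, hT, htoC_apply]
  have hE0 := hg.congr_of_eventuallyEq hEq
  -- simplify the derivative value
  have hqval : (Ring.inverse (Lc m₀)) e₀ = q := by
    rw [hinv m₀ hm₀U, htoC_apply]
  have hDval : (toC (M m₀) * toC B * toC (M m₀)) e₀ = M m₀ (B q) := by
    simp only [ContinuousLinearMap.mul_apply, htoC_apply, hqdef]
  simp only [Pi.add_apply] at hE0
  rw [hqval, hDval, hT, hT] at hE0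
  have key1 : inn e₀ (M m₀ (B q)) = inn q (B q) := (hMsa e₀ (B q)).symm
  have key2 : inn q (A q + B q) = inn e₀ q + m₀ * inn q (B q) := by
    have hsplit : A q + B q = (A q + (1-m₀) • B q) + m₀ • B q := by module
    rw [hsplit, inn_add_right, inn_smul_right, (hM m₀ hm₀U).2 e₀, inn_comm q e₀]
  have hmain : HasDerivAt Efun (γs + (1/2) * inn q (A q + B q)) m₀ := by
    refine hE0.congr_deriv ?_
    rw [key1, key2]; simp only [id_eq]; ring
  refine ⟨hmain, fun 𝒦 h𝒦 => ?_⟩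
  have hBq : inn q (B q) = 𝒦 := by
    rw [hB, inn_sum_right]
    simp only [inn_smul_right, h𝒦]
    rw [← Finset.sum_mul, hβsum, one_mul]
  have : inn q (A q + B q) = inn q (A q) + 𝒦 := by rw [inn_add_right, hBq]
  rwa [this] at hmain
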